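/- Let K be a function field with constant field F_q, let v be a normalized valuation on K, and let W ⊂ K be a finite-dimensional F_q-vector subspace such that v(w) > 0 for every w ∈ W. If i is an integer with 0 ≤ i < (q-1)·dim_{F_q} W, then for every x ∈ K, the sum over all w ∈ W of (x+w)^i equals 0. -/

import Mathlib

open Finset

lemma sum_pow_Fq (Fq : Type*) [Field Fq] [Fintype Fq] (k : ℕ)
    (h : ¬ (Fintype.card Fq - 1 ∣ k ∧ k ≠ 0)) : ∑ c : Fq, c ^ k = 0 := by
  classical
  by_cases hk : k = 0
  · simp only [hk, pow_zero, sum_const, card_univ, nsmul_eq_mul, mul_one]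
    exact FiniteField.cast_card_eq_zero Fq
  · have hdvd : ¬ (Fintype.card Fq - 1 ∣ k) := fun hd => h ⟨hd, hk⟩
    let φ : Fqˣ ↪ Fq := ⟨Units.val, Units.val_injective⟩
    have huniv : univ.map φ = univ \ {0} := by
      ext x
      simpa only [mem_map, mem_univ, Function.Embedding.coeFn_mk, true_and, mem_sdiff,
        mem_singleton, φ] using (show (∃ a : Fqˣ, (a : Fq) = x) ↔ ¬x = 0 from isUnit_iff_ne_zero)
    calc
      ∑ x : Fq, x ^ k = ∑ x ∈ univ \ {(0 : Fq)}, x ^ k := by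
        rw [← sum_sdiff ({0} : Finset Fq).subset_univ, sum_singleton, zero_pow hk, add_zero]
      _ = ∑ x : Fqˣ, (x ^ k : Fq) := by simp [φ, ← huniv, univ.sum_map φ]
      _ = 0 := by rw [FiniteField.sum_pow_units Fq k, if_neg hdvd]

lemma key_sum_pow (Fq K : Type*) [Field Fq] [Fintype Fq] [Field K] [Algebra Fq K]
    (n : ℕ) :
    ∀ (j : ℕ), j < (Fintype.card Fq - 1) * n → ∀ (x : K) (e : Fin n → K),
      ∑ f : Fin n → Fq, (x + ∑ i, f i • e i) ^ j = 0 := by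
  classical
  induction n with
  | zero => intro j hj; simp at hj
  | succ n ih =>
    intro j hj x e
    set q := Fintype.card Fq with hq
    rw [← ((Fin.consEquiv (fun _ : Fin (n+1) => Fq)).sum_comp
      (fun f => (x + ∑ i, f i • e i) ^ j))]
    rw [Fintype.sum_prod_type]
    have hsplit : ∀ (c : Fq) (f : Fin n → Fq),
        x + ∑ i, ((Fin.consEquiv (fun _ : Fin (n+1) => Fq)) (c, f)) i • e i
          = c • e 0 + (x + ∑ i : Fin n, f i • e i.succ) := by
      intro c f
      rw [Fin.sum_univ_succ]
      simp [Fin.consEquiv]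
      ring
    simp only [hsplit]
    have expand : ∀ (c : Fq) (f : Fin n → Fq),
        (c • e 0 + (x + ∑ i : Fin n, f i • e i.succ)) ^ j
          = ∑ k ∈ range (j + 1),
              (c • e 0) ^ k * (x + ∑ i : Fin n, f i • e i.succ) ^ (j - k) * (j.choose k : K) :=
      fun c f => add_pow _ _ _
    simp only [expand]
    have main : ∀ k ∈ range (j + 1),
        (∑ c : Fq, ∑ f : Fin n → Fq,
          (c • e 0) ^ k * (x + ∑ i : Fin n, f i • e i.succ) ^ (j - k) * (j.choose k : K))
          = 0 := by
      intro k hk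
      by_cases hgood : (q - 1 ∣ k ∧ k ≠ 0)
      · have hk1 : q - 1 ≤ k := Nat.le_of_dvd (Nat.pos_of_ne_zero hgood.2) hgood.1
        have hkj : k ≤ j := Nat.lt_succ_iff.mp (mem_range.mp hk)
        have hjk : j - k < (q - 1) * n := by
          rw [Nat.mul_succ] at hj
          have h2 : 2 ≤ q := Fintype.one_lt_card
          omega
        have hz := ih (j - k) hjk x (fun i => e i.succ)
        refine Finset.sum_eq_zero fun c _ => ?_
        have hre : ∀ f : Fin n → Fq,
            (c • e 0) ^ k * (x + ∑ i : Fin n, f i • e i.succ) ^ (j - k) * (j.choose k : K)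
              = ((c • e 0) ^ k * (j.choose k : K))
                * (x + ∑ i : Fin n, f i • e i.succ) ^ (j - k) := fun f => by ring
        rw [Finset.sum_congr rfl fun f _ => hre f, ← Finset.mul_sum, hz, mul_zero]
      · rw [Finset.sum_comm]
        refine Finset.sum_eq_zero fun f _ => ?_
        have hA : ∑ c : Fq, (c • e 0) ^ k = 0 := by
          simp only [smul_pow]
          rw [← Finset.sum_smul, sum_pow_Fq Fq k hgood, zero_smul]
        have hre : ∀ c : Fq,
            (c • e 0) ^ k * (x + ∑ i : Fin n, f i • e i.succ) ^ (j - k) * (j.choose k : K)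
              = ((x + ∑ i : Fin n, f i • e i.succ) ^ (j - k) * (j.choose k : K))
                * (c • e 0) ^ k := fun c => by ring
        rw [Finset.sum_congr rfl fun c _ => hre c, ← Finset.mul_sum, hA, mul_zero]
    rw [Finset.sum_congr rfl (fun c _ => Finset.sum_comm), Finset.sum_comm]
    exact Finset.sum_eq_zero main

theorem stmt0 (p : ℕ) [Fact p.Prime] (q : ℕ)
    (Fq K : Type*) [Field Fq] [Fintype Fq] [Field K] [Algebra Fq K]
    (hq : Fintype.card Fq = q) (hchar : CharP K p)
    (v : AddValuation K (WithTop ℤ))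
    (hv : ∀ n : ℤ, ∃ x : Kˣ, v (x : K) = (n : WithTop ℤ))
    (W : Subspace Fq K) [FiniteDimensional Fq W] [Fintype W]
    (hW : ∀ w ∈ W, 0 < v w)
    (i : ℕ) (hi : i < (q - 1) * Module.finrank Fq W)
    (x : K) :
    ∑ w : W, (x + (w : K)) ^ i = 0 := by
  classical
  subst hq
  set n := Module.finrank Fq W with hn
  let b : Module.Basis (Fin n) Fq W := Module.finBasis Fq W
  have hkey := key_sum_pow Fq K n i hi x (fun k => (b k : K))
  rw [← hkey]
  refine Fintype.sum_equiv b.equivFun.toEquiv _ _ fun w => ?_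
  congr 1
  congr 1
  have : (w : K) = ((∑ k, b.equivFun w k • b k : W) : K) := by
    rw [b.sum_equivFun w]
  rw [this]
  push_cast
  rfl
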